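/- Let S be a positive operator on a right quaternionic Hilbert space given by S = Σ_{i=1}^n |η^i⟩⟨η^i| for a linearly independent set {η^1,…,η^n}. Then a linearly independent set {ξ^1,…,ξ^n} satisfies S = Σ_{i=1}^n |ξ^i⟩⟨ξ^i| if and only if there is an n×n quaternionic unitary matrix u = (u_{ji}) with ξ^i = Σ_{j=1}^n η^j u_{ji} for all i. -/
import Mathlib


noncomputable section

open MulOpposite

abbrev Quat := Quaternion ℝ

class RQH (V : Type*) [NormedAddCommGroup V] [Module Quatᵐᵒᵖ V] where
  inn : V → V → Quat
  conj_symm : ∀ φ ψ : V, star (inn φ ψ) = inn ψ φ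
  add_right : ∀ φ ψ ω : V, inn φ (ψ + ω) = inn φ ψ + inn φ ω
  smul_right : ∀ (φ ψ : V) (q : Quat), inn φ (op q • ψ) = inn φ ψ * q
  norm_sq : ∀ φ : V, inn φ φ = ((‖φ‖ ^ 2 : ℝ) : Quat)

open RQH

variable {V : Type*} [NormedAddCommGroup V] [Module Quatᵐᵒᵖ V] [CompleteSpace V] [RQH V]

def IsBddRL (A : V → V) : Prop :=
  (∀ x y : V, A (x + y) = A x + A y) ∧
  (∀ (q : Quatᵐᵒᵖ) (x : V), A (q • x) = q • A x) ∧
  (∃ C : ℝ, ∀ x : V, ‖A x‖ ≤ C * ‖x‖)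

def IsSA (A : V → V) : Prop := ∀ φ ψ : V, inn (A φ) ψ = inn φ (A ψ)

def IsPos (A : V → V) : Prop := ∀ φ : V, ∃ r : ℝ, 0 ≤ r ∧ inn (A φ) φ = (r : Quat)

def opN (A : V → V) : ℝ := sSup { r : ℝ | ∃ φ : V, ‖φ‖ = 1 ∧ r = ‖A φ‖ }

def mA (A : V → V) : ℝ := sInf { r : ℝ | ∃ φ : V, ‖φ‖ = 1 ∧ r = (inn (A φ) φ).re }

def MA (A : V → V) : ℝ := sSup { r : ℝ | ∃ φ : V, ‖φ‖ = 1 ∧ r = (inn (A φ) φ).re }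

def Rq (A : V → V) (l : Quat) (ψ : V) : V :=
  A (A ψ) - op ((2 * l.re : ℝ) : Quat) • A ψ + op ((‖l‖ ^ 2 : ℝ) : Quat) • ψ

def SInv (T : V → V) : Prop :=
  ∃ B : V → V, IsBddRL B ∧ (∀ x, T (B x) = x) ∧ (∀ x, B (T x) = x)

def sspec (A : V → V) : Set Quat := { l | ¬ SInv (Rq A l) }



section Auxiliary

variable {V : Type*} [NormedAddCommGroup V] [Module Quatᵐᵒᵖ V] [RQH V]

lemma inn_zero_right (φ : V) : inn φ (0 : V) = 0 := by
  have h : inn φ (0 : V) = inn φ 0 + inn φ 0 := by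
    simpa using add_right φ (0 : V) 0
  exact (left_eq_add.mp h)

lemma inn_add_left (φ ψ ω : V) : inn (φ + ψ) ω = inn φ ω + inn ψ ω := by
  rw [← conj_symm, add_right, star_add, conj_symm, conj_symm]

lemma inn_smul_left (φ ψ : V) (q : Quat) :
    inn (op q • φ) ψ = star q * inn φ ψ := by
  rw [← conj_symm, smul_right, star_mul, conj_symm]

/-- `inn x ·` as an additive monoid hom. -/
def innRhom (x : V) : V →+ Quat := AddMonoidHom.mk' (inn x) (fun a b => add_right x a b)

lemma inn_sum_right {ι : Type*} (x : V) (s : Finset ι) (f : ι → V) :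
    inn x (∑ i ∈ s, f i) = ∑ i ∈ s, inn x (f i) :=
  map_sum (innRhom x) f s

lemma inn_sum_left {ι : Type*} (x : V) (s : Finset ι) (f : ι → V) :
    inn (∑ i ∈ s, f i) x = ∑ i ∈ s, inn (f i) x := by
  rw [← conj_symm, inn_sum_right, star_sum]
  exact Finset.sum_congr rfl fun i _ => conj_symm _ _

lemma eq_zero_of_inn_self (φ : V) (h : inn φ φ = 0) : φ = 0 := by
  rw [norm_sq] at h
  have h2 : (‖φ‖ ^ 2 : ℝ) = 0 := Quaternion.coe_injective (by simpa using h)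
  have : ‖φ‖ = 0 := by
    have := pow_eq_zero_iff (n := 2) (by norm_num) |>.mp h2
    exact this
  simpa using this

/-- Double opposite smul collapses. -/
lemma op_smul_op_smul' (a b : Quat) (x : V) :
    op a • (op b • x) = op (b * a) • x := by
  rw [smul_smul, ← MulOpposite.op_mul]

/-- Key sum rearrangement. -/
lemma sum_smul_sum {n : ℕ} (c : Fin n → Quat) (w : Matrix (Fin n) (Fin n) Quat)
    (x : Fin n → V) :
    (∑ i : Fin n, op (c i) • (∑ j : Fin n, op (w j i) • x j)) =
      ∑ j : Fin n, op (∑ i : Fin n, w j i * c i) • x j := by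
  have : ∀ i : Fin n, op (c i) • (∑ j : Fin n, op (w j i) • x j)
      = ∑ j : Fin n, op (w j i * c i) • x j := by
    intro i
    rw [Finset.smul_sum]
    exact Finset.sum_congr rfl fun j _ => op_smul_op_smul' _ _ _
  rw [Finset.sum_congr rfl fun i _ => this i, Finset.sum_comm]
  refine Finset.sum_congr rfl fun j _ => ?_
  rw [Finset.op_sum, Finset.sum_smul]

/-- Linear-independence extraction for `Quat` coefficients. -/
lemma coeff_ext {n : ℕ} {x : Fin n → V} (hx : LinearIndependent Quatᵐᵒᵖ x)
    (a b : Fin n → Quat) (h : (∑ i : Fin n, op (a i) • x i) = ∑ i : Fin n, op (b i) • x i) :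
    ∀ i, a i = b i := by
  have h0 : (∑ i : Fin n, (op (a i) - op (b i)) • x i) = 0 := by
    have := sub_eq_zero.mpr h
    rw [← Finset.sum_sub_distrib] at this
    simpa [sub_smul] using this
  intro i
  have := (Fintype.linearIndependent_iff.mp hx) (fun i => op (a i) - op (b i)) h0 i
  have : op (a i) = op (b i) := sub_eq_zero.mp this
  exact MulOpposite.op_injective this

/-- `Quatᵐᵒᵖ ≃ₗ[Quatᵐᵒᵖ] Quat` via `unop`. -/
def unopLE : Quatᵐᵒᵖ ≃ₗ[Quatᵐᵒᵖ] Quat where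
  toFun := unop
  invFun := op
  left_inv _ := rfl
  right_inv _ := rfl
  map_add' _ _ := rfl
  map_smul' q x := by
    simp [MulOpposite.smul_eq_mul_unop, smul_eq_mul, MulOpposite.unop_mul]

instance : Module.Finite Quatᵐᵒᵖ Quat := Module.Finite.equiv unopLE

/-- Dual vectors exist for a linearly independent family. -/
lemma exists_dual {n : ℕ} (x : Fin n → V) (hx : LinearIndependent Quatᵐᵒᵖ x)
    (c : Fin n → Quat) : ∃ φ : V, ∀ i, inn (x i) φ = c i := by
  classical
  let T : (Fin n → Quat) →ₗ[Quatᵐᵒᵖ] (Fin n → Quat) :=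
    { toFun := fun a i => inn (x i) (∑ j : Fin n, op (a j) • x j)
      map_add' := by
        intro a b
        funext i
        have hsum : (∑ j : Fin n, op ((a + b) j) • x j)
            = (∑ j : Fin n, op (a j) • x j) + (∑ j : Fin n, op (b j) • x j) := by
          rw [← Finset.sum_add_distrib]
          exact Finset.sum_congr rfl fun j _ => by
            simp [MulOpposite.op_add, add_smul]
        simp only [hsum, add_right]
        rfl
      map_smul' := by
        intro q a
        funext i
        have hsum : (∑ j : Fin n, op ((q • a) j) • x j)
            = q • (∑ j : Fin n, op (a j) • x j) := by
          rw [Finset.smul_sum]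
          refine Finset.sum_congr rfl fun j _ => ?_
          have : (q • a) j = a j * unop q := rfl
          rw [this, ← op_smul_op_smul']
          congr 1
        have hq : q = op (unop q) := rfl
        simp only [hsum]
        rw [hq, smul_right]
        rfl }
  have h0 : ∀ a, T a = 0 → a = 0 := by
    intro a ha
    set Φ : V := ∑ j : Fin n, op (a j) • x j with hΦ
    have hin : inn Φ Φ = 0 := by
      rw [hΦ, inn_sum_left]
      have : ∀ i, inn (op (a i) • x i) Φ = star (a i) * inn (x i) Φ := fun i =>
        inn_smul_left _ _ _
      rw [Finset.sum_congr rfl fun i _ => this i]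
      refine Finset.sum_eq_zero fun i _ => ?_
      have : inn (x i) Φ = 0 := congrFun ha i
      rw [this, mul_zero]
    have hΦ0 : Φ = 0 := eq_zero_of_inn_self _ hin
    funext i
    have := (Fintype.linearIndependent_iff.mp hx) (fun j => op (a j)) (by rw [← hΦ]; exact hΦ0) i
    simpa using MulOpposite.op_injective (by simpa using this)
  have hinj : Function.Injective T := by
    intro a b hab
    have := h0 (a - b) (by rw [map_sub, hab, sub_self])
    exact sub_eq_zero.mp this
  obtain ⟨a, ha⟩ := LinearMap.injective_iff_surjective.mp hinj c
  exact ⟨∑ j : Fin n, op (a j) • x j, fun i => congrFun ha i⟩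

end Auxiliary

/-- Two linearly independent families give the same operator S = Σᵢ|ηⁱ⟩⟨ηⁱ| iff they are
related by a quaternionic unitary matrix. -/
theorem stmt18 (n : ℕ) (η ξ : Fin n → V)
    (hη : LinearIndependent Quatᵐᵒᵖ η) (hξ : LinearIndependent Quatᵐᵒᵖ ξ) :
    (∀ φ : V, ∑ i : Fin n, op (inn (η i) φ) • η i = ∑ i : Fin n, op (inn (ξ i) φ) • ξ i) ↔
      ∃ u : Matrix (Fin n) (Fin n) Quat,
        u * u.conjTranspose = 1 ∧ u.conjTranspose * u = 1 ∧
        ∀ i : Fin n, ξ i = ∑ j : Fin n, op (u j i) • η j := by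
  classical
  constructor
  · intro h
    choose φd hφd using fun k => exists_dual ξ hξ (fun i => if i = k then (1 : Quat) else 0)
    choose ψd hψd using fun k => exists_dual η hη (fun j => if j = k then (1 : Quat) else 0)
    have sum_delta : ∀ (x : Fin n → V) (k : Fin n),
        (∑ i : Fin n, op (if i = k then (1 : Quat) else 0) • x i) = x k := by
      intro x k
      have h1 : ∀ i : Fin n, op (if i = k then (1 : Quat) else 0) • x i
          = if i = k then x i else 0 := by
        intro i; by_cases hik : i = k <;> simp [hik]
      rw [Finset.sum_congr rfl fun i _ => h1 i]
      simp
    set u : Matrix (Fin n) (Fin n) Quat := fun j k => inn (η j) (φd k) with hu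
    set v : Matrix (Fin n) (Fin n) Quat := fun i k => inn (ξ i) (ψd k) with hv
    have hξeq : ∀ k, ξ k = ∑ j : Fin n, op (u j k) • η j := by
      intro k
      have hk := h (φd k)
      have hr : (∑ i : Fin n, op (inn (ξ i) (φd k)) • ξ i) = ξ k := by
        rw [Finset.sum_congr rfl fun i _ => by rw [hφd k i]]
        exact sum_delta ξ k
      rw [hr] at hk
      exact hk.symm
    have hηeq : ∀ k, η k = ∑ i : Fin n, op (v i k) • ξ i := by
      intro k
      have hk := h (ψd k)
      have hl : (∑ i : Fin n, op (inn (η i) (ψd k)) • η i) = η k := by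
        rw [Finset.sum_congr rfl fun i _ => by rw [hψd k i]]
        exact sum_delta η k
      rw [hl] at hk
      exact hk
    have hvconj : ∀ i k, v i k = star (u k i) := by
      intro i k
      have : v i k = inn (ξ i) (ψd k) := rfl
      rw [this, hξeq i, inn_sum_left]
      rw [Finset.sum_congr rfl fun j _ => inn_smul_left (η j) (ψd k) (u j i)]
      rw [Finset.sum_congr rfl fun j _ => by rw [hψd k j]]
      simp
    have hveq : v = u.conjTranspose := by
      refine Matrix.ext fun i k => ?_
      rw [Matrix.conjTranspose_apply]
      exact hvconj i k
    have huv1 : u * v = 1 := by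
      have hcomp : ∀ k, η k = ∑ j : Fin n, op ((u * v) j k) • η j := by
        intro k
        conv_lhs => rw [hηeq k]
        rw [Finset.sum_congr rfl fun i _ => by rw [hξeq i]]
        rw [sum_smul_sum (fun i => v i k) u η]
        exact Finset.sum_congr rfl fun j _ => by rw [Matrix.mul_apply]
      refine Matrix.ext fun j k => ?_
      have hsum : (∑ j : Fin n, op ((u * v) j k) • η j)
          = ∑ j : Fin n, op (if j = k then (1 : Quat) else 0) • η j := by
        rw [← hcomp k, ← sum_delta η k]
      have := coeff_ext hη (fun j => (u * v) j k)
        (fun j => if j = k then (1 : Quat) else 0) hsum j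
      rw [this, Matrix.one_apply]
    have hvu1 : v * u = 1 := by
      have hcomp : ∀ k, ξ k = ∑ i : Fin n, op ((v * u) i k) • ξ i := by
        intro k
        conv_lhs => rw [hξeq k]
        rw [Finset.sum_congr rfl fun j _ => by rw [hηeq j]]
        rw [sum_smul_sum (fun j => u j k) v ξ]
        exact Finset.sum_congr rfl fun i _ => by rw [Matrix.mul_apply]
      refine Matrix.ext fun i k => ?_
      have hsum : (∑ i : Fin n, op ((v * u) i k) • ξ i)
          = ∑ i : Fin n, op (if i = k then (1 : Quat) else 0) • ξ i := by
        rw [← hcomp k, ← sum_delta ξ k]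
      have := coeff_ext hξ (fun i => (v * u) i k)
        (fun i => if i = k then (1 : Quat) else 0) hsum i
      rw [this, Matrix.one_apply]
    exact ⟨u, by rw [← hveq]; exact huv1, by rw [← hveq]; exact hvu1, hξeq⟩
  · rintro ⟨u, huv, _, hx⟩ φ
    have hinn : ∀ i, inn (ξ i) φ = ∑ k : Fin n, star (u k i) * inn (η k) φ := by
      intro i
      rw [hx i, inn_sum_left]
      exact Finset.sum_congr rfl fun k _ => inn_smul_left _ _ _
    symm
    obtain ⟨c, hc⟩ : ∃ c : Fin n → Quat, ∀ i, inn (ξ i) φ = c i := ⟨_, fun i => rfl⟩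
    rw [Finset.sum_congr rfl fun i _ => by rw [hc i, hx i]]
    rw [sum_smul_sum c u η]
    refine Finset.sum_congr rfl fun j _ => ?_
    congr 2
    calc ∑ i : Fin n, u j i * c i
        = ∑ i : Fin n, ∑ k : Fin n, u j i * (star (u k i) * inn (η k) φ) := by
          refine Finset.sum_congr rfl fun i _ => ?_
          rw [← hc i, hinn i, Finset.mul_sum]
      _ = ∑ k : Fin n, (∑ i : Fin n, u j i * star (u k i)) * inn (η k) φ := by
          rw [Finset.sum_comm]
          refine Finset.sum_congr rfl fun k _ => ?_
          rw [Finset.sum_mul]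
          exact Finset.sum_congr rfl fun i _ => (mul_assoc _ _ _).symm
      _ = ∑ k : Fin n, (1 : Matrix (Fin n) (Fin n) Quat) j k * inn (η k) φ := by
          refine Finset.sum_congr rfl fun k _ => ?_
          congr 1
          have hjk := Matrix.ext_iff.mpr huv j k
          rw [Matrix.mul_apply] at hjk
          simpa [Matrix.conjTranspose_apply] using hjk
      _ = inn (η j) φ := by simp [Matrix.one_apply]
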